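/- Let T = ℝ/2πℤ with normalized Haar probability measure ν and fix ε ∈ (0,1). For i ≥ 1 let I_i ⊂ T be the closed arc of points at distance at most ε^{3^i}/2 from 0, and define the van Enter–Ruszel potential U : T → ℝ by U(x) = Σ_{i=1}^{∞} (3/2^{2i+1})·1_{I_{2i}}(x) + Σ_{i=1}^{∞} (3/2^{2i+2})·1_{I_{2i+1}}(x − π) + (1/4)·1_{I_1}(x − π). Let N = { x ∈ T : dist(x, 0) ≤ π/2 } and define G_ε(β) = ( ∫_N e^{βU} dν ) / ( ∫_T e^{βU} dν ) for β > 0. Then for every δ ∈ (0, 1/2) there exists ε_δ > 0 such that for all 0 < ε < ε_δ: limsup_{β→∞} G_ε(β) > 1 − δ and liminf_{β→∞} G_ε(β) < δ. In particular, for ε small enough G_ε(β) has no limit as β → ∞, so the one-parameter family of probability measures on T with densities e^{βU}/∫_T e^{βU} dν (the two-site marginals of the Gibbs states of the nearest-neighbor interaction A(x,y) = U(x−y)) does not converge weakly as the temperature goes to zero: there is no selection of measure. -/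

import Mathlib

open MeasureTheory Filter Topology

noncomputable section

instance : Fact (0 < 2 * Real.pi) := ⟨by positivity⟩

/-- The circle `M = ℝ/2πℤ` with arc-length metric. -/
abbrev Circ : Type := AddCircle (2 * Real.pi)

/-- The normalized Haar (Lebesgue) probability measure on the circle. -/
def haarC : Measure Circ := AddCircle.haarAddCircle

/-- The closed arc `I_i` of points at distance at most `ε^{3^i}/2` from `0 ∈ T`. -/
def Iarc (ε : ℝ) (i : ℕ) : Set Circ := {x : Circ | ‖x‖ ≤ ε ^ (3 ^ i) / 2}

/-- The van Enter–Ruszel potential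
`U(x) = Σ_i (3/2^{2i+1}) 1_{I_{2i}}(x) + Σ_i (3/2^{2i+2}) 1_{I_{2i+1}}(x−π) + (1/4) 1_{I_1}(x−π)`
(sums over `i ≥ 1`). -/
def Upot (ε : ℝ) : Circ → ℝ := fun x =>
  (∑' i : ℕ, (3 / 2 ^ (2 * (i + 1) + 1) : ℝ) *
      Set.indicator (Iarc ε (2 * (i + 1))) (fun _ => (1 : ℝ)) x)
  + (∑' i : ℕ, (3 / 2 ^ (2 * (i + 1) + 2) : ℝ) *
      Set.indicator (Iarc ε (2 * (i + 1) + 1)) (fun _ => (1 : ℝ)) (x - (Real.pi : Circ)))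
  + (1 / 4 : ℝ) * Set.indicator (Iarc ε 1) (fun _ => (1 : ℝ)) (x - (Real.pi : Circ))

/-- The neighborhood `N` of the ferromagnetic configurations: points at distance
at most `π/2` from `0`. -/
def Nset : Set Circ := {x : Circ | ‖x‖ ≤ Real.pi / 2}

/-- `G_ε(β) = (∫_N e^{βU} dν)/(∫_T e^{βU} dν)`, the two-site Gibbs probability of `N`. -/
def Gfun (ε β : ℝ) : ℝ :=
  (∫ x in Nset, Real.exp (β * Upot ε x) ∂haarC) / ∫ x, Real.exp (β * Upot ε x) ∂haarC

namespace VER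

open Set Real

/-! ### coefficients -/

lemma cE_eq (i : ℕ) : (3 / 2 ^ (2 * (i + 1) + 1) : ℝ) = (3/8) * (1/4)^i := by
  have h : (2:ℝ) ^ (2 * (i + 1) + 1) = 8 * 4 ^ i := by
    rw [show 2 * (i + 1) + 1 = 2 * i + 3 by ring, pow_add, pow_mul]
    norm_num [mul_comm]
  rw [h, one_div, inv_pow]
  rw [div_eq_mul_inv, mul_inv]
  ring

lemma cO_eq (i : ℕ) : (3 / 2 ^ (2 * (i + 1) + 2) : ℝ) = (3/16) * (1/4)^i := by
  have h : (2:ℝ) ^ (2 * (i + 1) + 2) = 16 * 4 ^ i := by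
    rw [show 2 * (i + 1) + 2 = 2 * i + 4 by ring, pow_add, pow_mul]
    norm_num [mul_comm]
  rw [h, one_div, inv_pow, div_eq_mul_inv, mul_inv]
  ring

lemma summable_cE : Summable (fun i : ℕ => (3 / 2 ^ (2 * (i + 1) + 1) : ℝ)) := by
  refine (((summable_geometric_of_lt_one (by norm_num) (by norm_num : (1/4:ℝ) < 1))).mul_left
    (3/8)).congr (fun i => (cE_eq i).symm)

lemma summable_cO : Summable (fun i : ℕ => (3 / 2 ^ (2 * (i + 1) + 2) : ℝ)) := by
  refine (((summable_geometric_of_lt_one (by norm_num) (by norm_num : (1/4:ℝ) < 1))).mul_left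
    (3/16)).congr (fun i => (cO_eq i).symm)

lemma tsum_cE : ∑' i : ℕ, (3 / 2 ^ (2 * (i + 1) + 1) : ℝ) = 1/2 := by
  rw [tsum_congr cE_eq, tsum_mul_left, tsum_geometric_of_lt_one (by norm_num) (by norm_num)]
  norm_num

lemma tsum_cO : ∑' i : ℕ, (3 / 2 ^ (2 * (i + 1) + 2) : ℝ) = 1/4 := by
  rw [tsum_congr cO_eq, tsum_mul_left, tsum_geometric_of_lt_one (by norm_num) (by norm_num)]
  norm_num

/-- partial sums on the `0` side -/
def Sp (k : ℕ) : ℝ := ∑ i ∈ Finset.range k, (3 / 2 ^ (2 * (i + 1) + 1) : ℝ)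

/-- partial sums on the `π` side -/
def Tp (k : ℕ) : ℝ := 1/4 + ∑ i ∈ Finset.range k, (3 / 2 ^ (2 * (i + 1) + 2) : ℝ)

lemma Sp_eq (k : ℕ) : Sp k = 1/2 - (1/2) * (1/4)^k := by
  induction k with
  | zero => simp [Sp]
  | succ n ih =>
    rw [Sp, Finset.sum_range_succ, ← Sp, ih, cE_eq]
    ring

lemma Tp_eq (k : ℕ) : Tp k = 1/2 - (1/4) * (1/4)^k := by
  induction k with
  | zero => norm_num [Tp]
  | succ n ih =>
    rw [Tp, Finset.sum_range_succ, ← add_assoc, ← Tp, ih, cO_eq]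
    ring

lemma nat_succ_le_ninepow (j : ℕ) : (j:ℝ) + 1 ≤ 9 ^ j := by
  induction j with
  | zero => norm_num
  | succ n ih =>
    have h9 : (1:ℝ) ≤ 9 ^ n := one_le_pow₀ (by norm_num)
    have h : (9:ℝ)^(n+1) = 9 * 9^n := by ring
    push_cast
    push_cast at ih
    nlinarith

/-! ### arcs -/

variable {ε : ℝ} {x y : Circ} {i j k m : ℕ}

lemma mem_Iarc : x ∈ Iarc ε i ↔ ‖x‖ ≤ ε ^ (3^i) / 2 := Iff.rfl

lemma Iarc_eq_ball (ε : ℝ) (i : ℕ) : Iarc ε i = Metric.closedBall (0:Circ) (ε ^ (3^i) / 2) := by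
  ext x
  simp [Iarc, Metric.mem_closedBall, dist_zero_right]

lemma measurableSet_Iarc : MeasurableSet (Iarc ε i) := by
  rw [Iarc_eq_ball]; exact Metric.isClosed_closedBall.measurableSet

lemma measurableSet_Nset : MeasurableSet (Nset) := by
  have : Nset = Metric.closedBall (0:Circ) (Real.pi/2) := by
    ext x; simp [Nset, Metric.mem_closedBall, dist_zero_right]
  rw [this]; exact Metric.isClosed_closedBall.measurableSet

lemma radius_le_half (hε0 : 0 < ε) (hε1 : ε ≤ 1) (i : ℕ) : ε ^ (3^i) / 2 ≤ 1/2 := by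
  have : ε ^ (3^i) ≤ 1 := pow_le_one₀ hε0.le hε1
  linarith

lemma Iarc_anti (hε0 : 0 < ε) (hε1 : ε ≤ 1) (hij : i ≤ j) : Iarc ε j ⊆ Iarc ε i := by
  intro x hx
  have hx' : ‖x‖ ≤ ε ^ (3^j) / 2 := hx
  have h3 : 3^i ≤ 3^j := Nat.pow_le_pow_right (by norm_num) hij
  have := pow_le_pow_of_le_one hε0.le hε1 h3
  show ‖x‖ ≤ ε ^ (3^i) / 2
  linarith

lemma Iarc_subset_Nset (hε0 : 0 < ε) (hε1 : ε ≤ 1) (i : ℕ) : Iarc ε i ⊆ Nset := by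
  intro x hx
  have h1 := radius_le_half hε0 hε1 i
  have hπ := Real.pi_gt_three
  exact le_trans (le_trans hx h1) (by linarith)

lemma norm_pi_circ : ‖((Real.pi : ℝ) : Circ)‖ = Real.pi := by
  have h : |Real.pi| ≤ |2 * Real.pi| / 2 := by
    rw [abs_of_pos Real.pi_pos, abs_of_pos (by positivity : (0:ℝ) < 2 * Real.pi)]
    linarith
  rw [(AddCircle.norm_coe_eq_abs_iff (p := 2 * Real.pi) (by positivity)).mpr h,
    abs_of_pos Real.pi_pos]

lemma shift_not_mem_Iarc (hε0 : 0 < ε) (hε1 : ε ≤ 1) (hx : x ∈ Nset) (i : ℕ) :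
    x - (Real.pi : Circ) ∉ Iarc ε i := by
  intro h
  have h1 : ‖x‖ ≤ Real.pi / 2 := hx
  have h2 : ‖x - (Real.pi : Circ)‖ ≤ ε ^ (3^i) / 2 := h
  have h3 := radius_le_half hε0 hε1 i
  have h4 : ‖((Real.pi : ℝ) : Circ)‖ ≤ ‖x‖ + ‖x - (Real.pi : Circ)‖ := by
    simpa [sub_sub_cancel] using norm_sub_le x (x - (Real.pi : Circ))
  rw [norm_pi_circ] at h4
  have hπ := Real.pi_gt_three
  linarith

lemma mem_shift_not_Nset (hε0 : 0 < ε) (hε1 : ε ≤ 1)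
    (h : x - (Real.pi : Circ) ∈ Iarc ε i) : x ∉ Nset := fun hx =>
  shift_not_mem_Iarc hε0 hε1 hx i h

lemma not_mem_Iarc_of_not_Nset (hε0 : 0 < ε) (hε1 : ε ≤ 1) (hx : x ∉ Nset) (i : ℕ) :
    x ∉ Iarc ε i := fun h => hx (Iarc_subset_Nset hε0 hε1 i h)

/-! ### the two series -/

lemma ind_nonneg {s : Set Circ} : 0 ≤ s.indicator (fun _ => (1:ℝ)) x :=
  Set.indicator_nonneg (fun _ _ => zero_le_one) x

lemma ind_le_one {s : Set Circ} : s.indicator (fun _ => (1:ℝ)) x ≤ 1 := by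
  by_cases h : x ∈ s <;> simp [h]

def fE (ε : ℝ) (x : Circ) (i : ℕ) : ℝ :=
  (3 / 2 ^ (2 * (i + 1) + 1) : ℝ) * Set.indicator (Iarc ε (2 * (i + 1))) (fun _ => (1 : ℝ)) x

def fO (ε : ℝ) (y : Circ) (i : ℕ) : ℝ :=
  (3 / 2 ^ (2 * (i + 1) + 2) : ℝ) * Set.indicator (Iarc ε (2 * (i + 1) + 1)) (fun _ => (1 : ℝ)) y

def Ept (ε : ℝ) (x : Circ) : ℝ := ∑' i, fE ε x i

def Opt (ε : ℝ) (y : Circ) : ℝ := ∑' i, fO ε y i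

lemma Upot_decomp (ε : ℝ) (x : Circ) :
    Upot ε x = Ept ε x + Opt ε (x - (Real.pi : Circ))
      + (1 / 4 : ℝ) * Set.indicator (Iarc ε 1) (fun _ => (1 : ℝ)) (x - (Real.pi : Circ)) := rfl

lemma fE_nonneg : 0 ≤ fE ε x i := by
  refine mul_nonneg (by positivity) ind_nonneg

lemma fO_nonneg : 0 ≤ fO ε y i := by
  refine mul_nonneg (by positivity) ind_nonneg

lemma fE_le : fE ε x i ≤ (3 / 2 ^ (2 * (i + 1) + 1) : ℝ) := by
  have h := ind_le_one (x := x) (s := Iarc ε (2 * (i + 1)))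
  have h3 : (0:ℝ) ≤ 3 / 2 ^ (2 * (i + 1) + 1) := by positivity
  calc fE ε x i ≤ (3 / 2 ^ (2 * (i + 1) + 1) : ℝ) * 1 := mul_le_mul_of_nonneg_left h h3
  _ = _ := mul_one _

lemma fO_le : fO ε y i ≤ (3 / 2 ^ (2 * (i + 1) + 2) : ℝ) := by
  have h := ind_le_one (x := y) (s := Iarc ε (2 * (i + 1) + 1))
  have h3 : (0:ℝ) ≤ 3 / 2 ^ (2 * (i + 1) + 2) := by positivity
  calc fO ε y i ≤ (3 / 2 ^ (2 * (i + 1) + 2) : ℝ) * 1 := mul_le_mul_of_nonneg_left h h3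
  _ = _ := mul_one _

lemma summable_fE : Summable (fE ε x) :=
  Summable.of_nonneg_of_le (fun _ => fE_nonneg) (fun _ => fE_le) summable_cE

lemma summable_fO : Summable (fO ε y) :=
  Summable.of_nonneg_of_le (fun _ => fO_nonneg) (fun _ => fO_le) summable_cO

lemma Ept_nonneg : 0 ≤ Ept ε x := tsum_nonneg (fun _ => fE_nonneg)

lemma Opt_nonneg : 0 ≤ Opt ε y := tsum_nonneg (fun _ => fO_nonneg)

lemma Ept_le_half : Ept ε x ≤ 1/2 :=
  le_trans (Summable.tsum_le_tsum (fun _ => fE_le) summable_fE summable_cE) tsum_cE.le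

lemma Opt_le_quarter : Opt ε y ≤ 1/4 :=
  le_trans (Summable.tsum_le_tsum (fun _ => fO_le) summable_fO summable_cO) tsum_cO.le

lemma Ept_le (hε0 : 0 < ε) (hε1 : ε ≤ 1) (hx : x ∉ Iarc ε (2*m+2)) : Ept ε x ≤ Sp m := by
  rw [Ept, tsum_eq_sum (s := Finset.range m) ?h0]
  · exact Finset.sum_le_sum (fun i _ => fE_le)
  case h0 =>
    intro i hi
    have him : m ≤ i := by simpa using hi
    have hsub : Iarc ε (2*(i+1)) ⊆ Iarc ε (2*m+2) := Iarc_anti hε0 hε1 (by omega)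
    rw [fE, Set.indicator_of_notMem (fun h => hx (hsub h)), mul_zero]

lemma Ept_ge (hε0 : 0 < ε) (hε1 : ε ≤ 1) (hx : x ∈ Iarc ε (2*m)) : Sp m ≤ Ept ε x := by
  refine le_trans ?_ (Summable.sum_le_tsum (Finset.range m) (fun i _ => fE_nonneg) summable_fE)
  refine Finset.sum_le_sum (fun i hi => ?_)
  have hi' : i + 1 ≤ m := by simpa using Finset.mem_range.mp hi
  have hmem : x ∈ Iarc ε (2 * (i+1)) := Iarc_anti hε0 hε1 (by omega) hx
  rw [fE, Set.indicator_of_mem hmem, mul_one]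

lemma Opt_le (hε0 : 0 < ε) (hε1 : ε ≤ 1) (hy : y ∉ Iarc ε (2*m+3)) :
    Opt ε y ≤ Tp m - 1/4 := by
  rw [Opt, tsum_eq_sum (s := Finset.range m) ?h0]
  · rw [Tp]; simp only [add_sub_cancel_left]
    exact Finset.sum_le_sum (fun i _ => fO_le)
  case h0 =>
    intro i hi
    have him : m ≤ i := by simpa using hi
    have hsub : Iarc ε (2*(i+1)+1) ⊆ Iarc ε (2*m+3) := Iarc_anti hε0 hε1 (by omega)
    rw [fO, Set.indicator_of_notMem (fun h => hy (hsub h)), mul_zero]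

lemma Opt_ge (hε0 : 0 < ε) (hε1 : ε ≤ 1) (hy : y ∈ Iarc ε (2*m+1)) :
    Tp m - 1/4 ≤ Opt ε y := by
  rw [Tp]; simp only [add_sub_cancel_left]
  refine le_trans ?_ (Summable.sum_le_tsum (Finset.range m) (fun i _ => fO_nonneg) summable_fO)
  refine Finset.sum_le_sum (fun i hi => ?_)
  have hi' : i + 1 ≤ m := by simpa using Finset.mem_range.mp hi
  have hmem : y ∈ Iarc ε (2 * (i+1) + 1) := Iarc_anti hε0 hε1 (by omega) hy
  rw [fO, Set.indicator_of_mem hmem, mul_one]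

/-! ### U-level facts -/

lemma U_nonneg (ε : ℝ) (x : Circ) : 0 ≤ Upot ε x := by
  rw [Upot_decomp]
  have h1 := Ept_nonneg (ε := ε) (x := x)
  have h2 := Opt_nonneg (ε := ε) (y := x - (Real.pi : Circ))
  have h3 := ind_nonneg (x := x - (Real.pi : Circ)) (s := Iarc ε 1)
  linarith

lemma U_le_one (ε : ℝ) (x : Circ) : Upot ε x ≤ 1 := by
  rw [Upot_decomp]
  have h1 := Ept_le_half (ε := ε) (x := x)
  have h2 := Opt_le_quarter (ε := ε) (y := x - (Real.pi : Circ))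
  have h3 := ind_le_one (x := x - (Real.pi : Circ)) (s := Iarc ε 1)
  linarith

lemma U_on_N (hε0 : 0 < ε) (hε1 : ε ≤ 1) (hx : x ∈ Nset) : Upot ε x = Ept ε x := by
  rw [Upot_decomp]
  have h2 : Opt ε (x - (Real.pi : Circ)) = 0 := by
    refine le_antisymm ?_ Opt_nonneg
    have := Opt_le (m := 0) hε0 hε1 (shift_not_mem_Iarc hε0 hε1 hx 3)
    rw [Tp_eq] at this; norm_num at this; exact this
  have h3 : Set.indicator (Iarc ε 1) (fun _ => (1:ℝ)) (x - (Real.pi : Circ)) = 0 :=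
    Set.indicator_of_notMem (shift_not_mem_Iarc hε0 hε1 hx 1) _
  rw [h2, h3]; ring

lemma U_on_Nc_le (hε0 : 0 < ε) (hε1 : ε ≤ 1) (hx : x ∉ Nset) : Upot ε x ≤ 1/2 := by
  rw [Upot_decomp]
  have h1 : Ept ε x = 0 := by
    refine le_antisymm ?_ Ept_nonneg
    have := Ept_le (m := 0) hε0 hε1 (not_mem_Iarc_of_not_Nset hε0 hε1 hx 2)
    rw [Sp_eq] at this; norm_num at this; exact this
  have h2 := Opt_le_quarter (ε := ε) (y := x - (Real.pi : Circ))
  have h3 := ind_le_one (x := x - (Real.pi : Circ)) (s := Iarc ε 1)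
  rw [h1]; linarith

lemma U_le_Tp (hε0 : 0 < ε) (hε1 : ε ≤ 1) (hx : x ∉ Nset)
    (h : x - (Real.pi : Circ) ∉ Iarc ε (2*m+3)) : Upot ε x ≤ Tp m := by
  rw [Upot_decomp]
  have h1 : Ept ε x = 0 := by
    refine le_antisymm ?_ Ept_nonneg
    have := Ept_le (m := 0) hε0 hε1 (not_mem_Iarc_of_not_Nset hε0 hε1 hx 2)
    rw [Sp_eq] at this; norm_num at this; exact this
  have h2 := Opt_le hε0 hε1 h
  have h3 := ind_le_one (x := x - (Real.pi : Circ)) (s := Iarc ε 1)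
  rw [h1]; linarith

lemma U_le_zero_of (hε0 : 0 < ε) (hε1 : ε ≤ 1)
    (h : x - (Real.pi : Circ) ∉ Iarc ε 1) (hx : x ∉ Nset) : Upot ε x ≤ 0 := by
  rw [Upot_decomp]
  have h1 : Ept ε x = 0 := by
    refine le_antisymm ?_ Ept_nonneg
    have := Ept_le (m := 0) hε0 hε1 (not_mem_Iarc_of_not_Nset hε0 hε1 hx 2)
    rw [Sp_eq] at this; norm_num at this; exact this
  have h2 : Opt ε (x - (Real.pi : Circ)) ≤ 0 := by
    have h' : x - (Real.pi : Circ) ∉ Iarc ε (2*0+3) :=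
      fun hh => h (Iarc_anti hε0 hε1 (by norm_num) hh)
    have := Opt_le (m := 0) hε0 hε1 h'
    rw [Tp_eq] at this; norm_num at this; exact this
  have h3 : Set.indicator (Iarc ε 1) (fun _ => (1:ℝ)) (x - (Real.pi : Circ)) = 0 :=
    Set.indicator_of_notMem h _
  rw [h1, h3]; linarith

lemma U_ge_Sp (hε0 : 0 < ε) (hε1 : ε ≤ 1) (hx : x ∈ Iarc ε (2*m)) : Sp m ≤ Upot ε x := by
  rw [Upot_decomp]
  have h1 := Ept_ge hε0 hε1 hx
  have h2 := Opt_nonneg (ε := ε) (y := x - (Real.pi : Circ))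
  have h3 := ind_nonneg (x := x - (Real.pi : Circ)) (s := Iarc ε 1)
  linarith

lemma U_ge_Tp (hε0 : 0 < ε) (hε1 : ε ≤ 1)
    (h : x - (Real.pi : Circ) ∈ Iarc ε (2*m+1)) : Tp m ≤ Upot ε x := by
  rw [Upot_decomp]
  have h1 := Ept_nonneg (ε := ε) (x := x)
  have h2 := Opt_ge hε0 hε1 h
  have h3 : Set.indicator (Iarc ε 1) (fun _ => (1:ℝ)) (x - (Real.pi : Circ)) = 1 :=
    Set.indicator_of_mem (Iarc_anti hε0 hε1 (by omega) h) _
  rw [h3]; linarith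

lemma U_le_Sp (hε0 : 0 < ε) (hε1 : ε ≤ 1) (hx : x ∈ Nset)
    (h : x ∉ Iarc ε (2*m+2)) : Upot ε x ≤ Sp m := by
  rw [U_on_N hε0 hε1 hx]; exact Ept_le hε0 hε1 h

/-! ### measurability and integrability -/

lemma measurable_ind {s : Set Circ} (hs : MeasurableSet s) (v : ℝ) :
    Measurable (s.indicator (fun _ => v)) := measurable_const.indicator hs

lemma measurable_Ept (ε : ℝ) : Measurable (Ept ε) := by
  apply measurable_of_tendsto_metrizable
    (f := fun n (x : Circ) => ∑ i ∈ Finset.range n, fE ε x i)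
  · intro n
    apply Finset.measurable_sum
    intro i _
    exact ((measurable_ind measurableSet_Iarc (1:ℝ)).const_mul _)
  · rw [tendsto_pi_nhds]
    intro x
    exact (summable_fE (ε := ε) (x := x)).hasSum.tendsto_sum_nat

lemma measurable_Opt (ε : ℝ) : Measurable (Opt ε) := by
  apply measurable_of_tendsto_metrizable
    (f := fun n (y : Circ) => ∑ i ∈ Finset.range n, fO ε y i)
  · intro n
    apply Finset.measurable_sum
    intro i _
    exact ((measurable_ind measurableSet_Iarc (1:ℝ)).const_mul _)
  · rw [tendsto_pi_nhds]
    intro y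
    exact (summable_fO (ε := ε) (y := y)).hasSum.tendsto_sum_nat

lemma measurable_sub_pi : Measurable (fun x : Circ => x - (Real.pi : Circ)) :=
  measurable_id.sub_const _

lemma measurable_U (ε : ℝ) : Measurable (Upot ε) := by
  have h : Upot ε = fun x => Ept ε x + Opt ε (x - (Real.pi : Circ))
      + (1 / 4 : ℝ) * Set.indicator (Iarc ε 1) (fun _ => (1 : ℝ)) (x - (Real.pi : Circ)) := by
    funext x; exact Upot_decomp ε x
  rw [h]
  exact ((measurable_Ept ε).add ((measurable_Opt ε).comp measurable_sub_pi)).add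
    (((measurable_ind measurableSet_Iarc (1:ℝ)).comp measurable_sub_pi).const_mul _)

instance : IsProbabilityMeasure haarC := by
  unfold haarC; infer_instance

instance : haarC.IsAddLeftInvariant := by
  unfold haarC; infer_instance

instance : haarC.IsAddHaarMeasure := by
  unfold haarC; infer_instance

lemma integrable_expU (ε β : ℝ) :
    Integrable (fun x => Real.exp (β * Upot ε x)) haarC := by
  refine (integrable_const (Real.exp |β|)).mono' ?_ ?_
  · exact (((measurable_U ε).const_mul β).exp).aestronglyMeasurable
  · refine Filter.Eventually.of_forall (fun x => ?_)
    rw [Real.norm_eq_abs, abs_of_pos (Real.exp_pos _)]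
    apply Real.exp_le_exp.mpr
    have h1 := U_nonneg ε x
    have h2 := U_le_one ε x
    have h3 := le_abs_self β
    have h4 := neg_abs_le β
    nlinarith

lemma expU_pos (ε β : ℝ) (x : Circ) : 0 < Real.exp (β * Upot ε x) := Real.exp_pos _

/-! ### measures of arcs -/

lemma haarC_Iarc (hε0 : 0 < ε) (hε1 : ε ≤ 1) (i : ℕ) :
    (haarC (Iarc ε i)).toReal = ε ^ (3^i) / (2 * Real.pi) := by
  have h2π : (0:ℝ) < 2 * Real.pi := by positivity
  have hle : ε ^ (3^i) ≤ 2 * Real.pi := by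
    have h1 : ε ^ (3^i) ≤ 1 := pow_le_one₀ hε0.le hε1
    nlinarith [Real.pi_gt_three]
  have hvol : (volume : Measure Circ) (Iarc ε i) = ENNReal.ofReal (ε ^ (3^i)) := by
    rw [Iarc_eq_ball, AddCircle.volume_closedBall]
    congr 1
    rw [show 2 * (ε ^ (3^i) / 2) = ε ^ (3^i) by ring]
    exact min_eq_right hle
  have hsmul : (volume : Measure Circ) (Iarc ε i)
      = ENNReal.ofReal (2 * Real.pi) * haarC (Iarc ε i) := by
    rw [AddCircle.volume_eq_smul_haarAddCircle]
    rfl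
  have hfin : haarC (Iarc ε i) ≠ ⊤ := measure_ne_top _ _
  have := congrArg ENNReal.toReal (hsmul.symm.trans hvol)
  rw [ENNReal.toReal_mul, ENNReal.toReal_ofReal h2π.le, ENNReal.toReal_ofReal (by positivity)]
    at this
  rw [← this]; field_simp

lemma haarC_preimage_sub {s : Set Circ} (c : Circ) :
    haarC ((fun x : Circ => x - c) ⁻¹' s) = haarC s := by
  have h : (fun x : Circ => x - c) = fun x => (-c) + x := by
    funext x; rw [sub_eq_neg_add]
  rw [h]
  exact measure_preimage_add haarC (-c) s

/-! ### integral helpers -/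

lemma integral_ind {s : Set Circ} (hs : MeasurableSet s) (v : ℝ) :
    ∫ x, s.indicator (fun _ => v) x ∂haarC = v * (haarC s).toReal := by
  rw [MeasureTheory.integral_indicator_const v hs, smul_eq_mul, mul_comm, measureReal_def]

lemma integrable_ind {s : Set Circ} (hs : MeasurableSet s) (v : ℝ) :
    Integrable (s.indicator (fun _ => v)) haarC :=
  (integrable_const v).indicator hs

lemma ind_shift {s : Set Circ} (c x : Circ) (v : ℝ) :
    s.indicator (fun _ => v) (x - c)
      = (((fun x : Circ => x - c)) ⁻¹' s).indicator (fun _ => v) x := by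
  by_cases h : x - c ∈ s <;> simp [Set.indicator_apply, h, Set.mem_preimage]

lemma measurableSet_preimage_sub {s : Set Circ} (hs : MeasurableSet s) (c : Circ) :
    MeasurableSet ((fun x : Circ => x - c) ⁻¹' s) :=
  (measurable_id.sub_const c) hs

/-- lower bound for a set integral of `exp (β U)` via a subset on which `U ≥ v`. -/
lemma setIntegral_expU_ge {ε β : ℝ} (hβ : 0 ≤ β) {W P : Set Circ} (hW : MeasurableSet W)
    (hP : MeasurableSet P) (hPW : P ⊆ W) {v : ℝ} (hv : ∀ x ∈ P, v ≤ Upot ε x) :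
    Real.exp (β * v) * (haarC P).toReal ≤ ∫ x in W, Real.exp (β * Upot ε x) ∂haarC := by
  have hInt := integrable_expU ε β
  have h1 : Real.exp (β * v) * (haarC P).toReal
      = ∫ _ in P, Real.exp (β * v) ∂haarC := by
    rw [MeasureTheory.setIntegral_const, smul_eq_mul, mul_comm, measureReal_def]
  rw [h1]
  refine le_trans (MeasureTheory.setIntegral_mono_on ((integrableOn_const_iff).mpr ?_)
    hInt.integrableOn hP (fun x hx => ?_)) ?_
  · right; exact measure_lt_top _ _
  · exact Real.exp_le_exp.mpr (mul_le_mul_of_nonneg_left (hv x hx) hβ)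
  · refine MeasureTheory.setIntegral_mono_set hInt.integrableOn
      (Filter.Eventually.of_forall (fun x => (Real.exp_pos _).le)) ?_
    exact HasSubset.Subset.eventuallyLE hPW

/-- total integral decomposition -/
lemma Z_decomp (ε β : ℝ) :
    (∫ x in Nset, Real.exp (β * Upot ε x) ∂haarC)
      + (∫ x in Nsetᶜ, Real.exp (β * Upot ε x) ∂haarC)
      = ∫ x, Real.exp (β * Upot ε x) ∂haarC :=
  MeasureTheory.integral_add_compl measurableSet_Nset (integrable_expU ε β)

lemma A_nonneg (ε β : ℝ) (W : Set Circ) :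
    0 ≤ ∫ x in W, Real.exp (β * Upot ε x) ∂haarC :=
  MeasureTheory.integral_nonneg (fun x => (Real.exp_pos _).le)

lemma Gfun_nonneg (ε β : ℝ) : 0 ≤ Gfun ε β :=
  div_nonneg (A_nonneg ε β _) (MeasureTheory.integral_nonneg (fun x => (Real.exp_pos _).le))

lemma Z_pos (ε β : ℝ) : 0 < ∫ x, Real.exp (β * Upot ε x) ∂haarC := by
  have h1 : ∀ x : Circ, Real.exp (-|β|) ≤ Real.exp (β * Upot ε x) := by
    intro x
    apply Real.exp_le_exp.mpr
    have h1 := U_nonneg ε x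
    have h2 := U_le_one ε x
    have h3 := le_abs_self β
    have h4 := neg_abs_le β
    nlinarith
  have h2 : ∫ (_ : Circ), Real.exp (-|β|) ∂haarC = Real.exp (-|β|) := by
    rw [MeasureTheory.integral_const, measureReal_def, measure_univ, ENNReal.toReal_one, one_smul]
  calc (0:ℝ) < Real.exp (-|β|) := Real.exp_pos _
  _ = ∫ (_ : Circ), Real.exp (-|β|) ∂haarC := h2.symm
  _ ≤ _ := MeasureTheory.integral_mono (integrable_const _) (integrable_expU ε β)
      (fun x => h1 x)

lemma Gfun_le_one (ε β : ℝ) : Gfun ε β ≤ 1 := by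
  rw [Gfun, div_le_one (Z_pos ε β)]
  rw [← Z_decomp ε β]
  have := A_nonneg ε β (Nsetᶜ)
  linarith

/-! ### exponent bookkeeping -/

lemma eps_pow_eq (hε0 : 0 < ε) (n : ℕ) :
    ε ^ n = Real.exp (-((n:ℝ) * Real.log ε⁻¹)) := by
  have h1 : Real.log ε⁻¹ = - Real.log ε := Real.log_inv ε
  rw [h1]
  rw [show -((n:ℝ) * - Real.log ε) = (n:ℝ) * Real.log ε by ring]
  rw [Real.exp_nat_mul, Real.exp_log hε0]

lemma exp_mul_eps (hε0 : 0 < ε) (u : ℝ) (n : ℕ) :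
    Real.exp u * ε ^ n = Real.exp (u - (n:ℝ) * Real.log ε⁻¹) := by
  rw [eps_pow_eq hε0 n, ← Real.exp_add]
  ring_nf

lemma L_ge_two (hε0 : 0 < ε) (hεs : ε ≤ 1/20) : 2 ≤ Real.log ε⁻¹ := by
  have h20 : (20:ℝ) ≤ ε⁻¹ := by
    rw [le_inv_comm₀ (by norm_num) hε0]
    linarith
  have hexp2 : Real.exp 2 ≤ 20 := by
    have h1 := Real.exp_one_lt_d9
    have h2 : Real.exp 2 = Real.exp 1 * Real.exp 1 := by
      rw [← Real.exp_add]; norm_num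
    nlinarith [Real.exp_pos 1]
  rw [Real.le_log_iff_exp_le (by positivity)]
  linarith

lemma two_pi_le_exp_two : 2 * Real.pi ≤ Real.exp 2 := by
  have h1 := Real.exp_one_gt_d9
  have h2 : Real.exp 2 = Real.exp 1 * Real.exp 1 := by
    rw [← Real.exp_add]; norm_num
  nlinarith [Real.pi_lt_d2, Real.exp_pos 1, Real.pi_pos]

lemma two_pow_two_mul (k : ℕ) : (2:ℝ)^(2*k) = 4^k := by
  rw [pow_mul]; norm_num

lemma four_inv_pow_cancel (k : ℕ) : (4:ℝ)^k * (1/4)^k = 1 := by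
  rw [← mul_pow]; norm_num

lemma three_pow_odd_cast (j : ℕ) : (3:ℝ)^(2*j+1) = 3 * 9^j := by
  rw [pow_succ, pow_mul]; norm_num [mul_comm]

lemma three_pow_even_cast (j : ℕ) : (3:ℝ)^(2*j) = 9^j := by
  rw [pow_mul]; norm_num

lemma geom_sum_le_two_eps (hε0 : 0 ≤ ε) (hεs : ε ≤ 1/2) (n : ℕ) :
    ∑ j ∈ Finset.range n, ε^(j+1) ≤ 2*ε := by
  have h1 : ∑ j ∈ Finset.range n, ε^(j+1) = ε * ∑ j ∈ Finset.range n, ε^j := by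
    rw [Finset.mul_sum]
    exact Finset.sum_congr rfl (fun j _ => by ring)
  rw [h1]
  have h2 : ∑ j ∈ Finset.range n, ε^j ≤ 2 := by
    have hne : ε ≠ 1 := by linarith
    rw [geom_sum_eq hne]
    have h3 : (0:ℝ) ≤ ε^n := by positivity
    have h4 : ε^n ≤ 1 := pow_le_one₀ hε0 (by linarith)
    have h5 : (ε^n - 1)/(ε - 1) = (1 - ε^n)/(1 - ε) := by
      rw [div_eq_div_iff (by linarith) (by linarith)]; ring
    rw [h5, div_le_iff₀ (by linarith)]
    linarith
  nlinarith [Finset.sum_nonneg (fun j (_ : j ∈ Finset.range n) => pow_nonneg hε0 j)]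

/-! ### key coefficient inequalities -/

lemma key_a_coeff {k j : ℕ} (hk : 1 ≤ k) (hj : j ≤ k) :
    2^(2*k+1)*(9:ℝ)^k * Tp j + ((j:ℝ)+1) + 9^k ≤ 2^(2*k+1)*(9:ℝ)^k * Sp k + 3*9^j := by
  rw [Sp_eq, Tp_eq, pow_succ, two_pow_two_mul]
  have hx : (0:ℝ) < 4^k := by positivity
  have hy : (0:ℝ) < 4^j := by positivity
  have ha : (0:ℝ) < 9^k := by positivity
  have hb : (0:ℝ) < 9^j := by positivity
  have hu : (0:ℝ) ≤ (1/4:ℝ)^j := by positivity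
  have f1 := four_inv_pow_cancel k
  have f2 := four_inv_pow_cancel j
  have hnj := nat_succ_le_ninepow j
  have hnk := nat_succ_le_ninepow k
  rcases eq_or_lt_of_le hj with rfl | hlt
  · nlinarith
  · have h4 : (4:ℝ)^(j+1) ≤ 4^k := pow_le_pow_right₀ (by norm_num) hlt
    have h4' : (4:ℝ)^(j+1) = 4 * 4^j := by ring
    have hxu : 4 ≤ (4:ℝ)^k * (1/4)^j := by
      have := mul_le_mul_of_nonneg_right (h4'.symm.trans_le h4) hu
      rw [mul_assoc] at this
      nlinarith
    nlinarith [mul_le_mul_of_nonneg_right hxu ha.le]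

lemma key_b_coeff {k : ℕ} (hk : 1 ≤ k) :
    2^(2*k)*(9:ℝ)^k + 1 ≤ 2^(2*k+1)*(9:ℝ)^k * Sp k - 9^k + 27*9^k := by
  rw [Sp_eq, pow_succ, two_pow_two_mul]
  have f1 := four_inv_pow_cancel k
  have ha : (1:ℝ) ≤ 9^k := one_le_pow₀ (by norm_num)
  nlinarith

lemma key_c_coeff {k : ℕ} (hk : 1 ≤ k) :
    18 ≤ 2^(2*k+1)*(9:ℝ)^k * Sp k - 9^k := by
  rw [Sp_eq, pow_succ, two_pow_two_mul]
  have f1 := four_inv_pow_cancel k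
  have ha : (9:ℝ) ≤ 9^k := by
    calc (9:ℝ) = 9^1 := by norm_num
    _ ≤ 9^k := pow_le_pow_right₀ (by norm_num) hk
  have hx : (4:ℝ) ≤ 4^k := by
    calc (4:ℝ) = 4^1 := by norm_num
    _ ≤ 4^k := pow_le_pow_right₀ (by norm_num) hk
  nlinarith

lemma key_a2_coeff {k m : ℕ} (hk : 1 ≤ k) (hm1 : 1 ≤ m) (hm : m ≤ k) :
    2^(2*k+4)*(9:ℝ)^k * Sp m + (m:ℝ) + 3*9^k ≤ 2^(2*k+4)*(9:ℝ)^k * Tp k + 9^m := by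
  rw [Sp_eq, Tp_eq]
  have h24 : (2:ℝ)^(2*k+4) = 16 * 4^k := by
    rw [pow_add, two_pow_two_mul]; ring
  rw [h24]
  have hx : (0:ℝ) < 4^k := by positivity
  have ha : (0:ℝ) < 9^k := by positivity
  have hu : (0:ℝ) ≤ (1/4:ℝ)^m := by positivity
  have f1 := four_inv_pow_cancel k
  have f2 := four_inv_pow_cancel m
  have hnm := nat_succ_le_ninepow m
  have h4 : (4:ℝ)^m ≤ 4^k := pow_le_pow_right₀ (by norm_num) hm
  have hxu : 1 ≤ (4:ℝ)^k * (1/4)^m := by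
    have := mul_le_mul_of_nonneg_right h4 hu
    nlinarith
  nlinarith [mul_le_mul_of_nonneg_right hxu ha.le]

lemma key_b2_coeff {k : ℕ} (hk : 1 ≤ k) :
    2^(2*k+3)*(9:ℝ)^k + 1 ≤ 2^(2*k+4)*(9:ℝ)^k * Tp k - 3*9^k + 9^(k+1) := by
  rw [Tp_eq]
  have h24 : (2:ℝ)^(2*k+4) = 16 * 4^k := by
    rw [pow_add, two_pow_two_mul]; ring
  have h23 : (2:ℝ)^(2*k+3) = 8 * 4^k := by
    rw [pow_add, two_pow_two_mul]; ring
  rw [h24, h23]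
  have f1 := four_inv_pow_cancel k
  have ha : (1:ℝ) ≤ 9^k := one_le_pow₀ (by norm_num)
  have h9 : (9:ℝ)^(k+1) = 9 * 9^k := by ring
  nlinarith

lemma key_c2_coeff {k : ℕ} (hk : 1 ≤ k) :
    18 ≤ 2^(2*k+4)*(9:ℝ)^k * Tp k - 3*9^k := by
  rw [Tp_eq]
  have h24 : (2:ℝ)^(2*k+4) = 16 * 4^k := by
    rw [pow_add, two_pow_two_mul]; ring
  rw [h24]
  have f1 := four_inv_pow_cancel k
  have ha : (9:ℝ) ≤ 9^k := by
    calc (9:ℝ) = 9^1 := by norm_num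
    _ ≤ 9^k := pow_le_pow_right₀ (by norm_num) hk
  have hx : (4:ℝ) ≤ 4^k := by
    calc (4:ℝ) = 4^1 := by norm_num
    _ ≤ 4^k := pow_le_pow_right₀ (by norm_num) hk
  nlinarith

/-! ### direction 1: the arc at 0 dominates -/

set_option maxHeartbeats 2000000 in
lemma dir_one {ε : ℝ} (hε0 : 0 < ε) (hεs : ε ≤ 1/20) {k : ℕ} (hk : 1 ≤ k) :
    1 - 9*ε ≤ Gfun ε (2^(2*k+1) * 9^k * Real.log ε⁻¹) := by
  classical
  have hε1 : ε ≤ 1 := by linarith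
  have h2π : (0:ℝ) < 2*Real.pi := by positivity
  set L := Real.log ε⁻¹ with hLdef
  have hL2 : 2 ≤ L := L_ge_two hε0 hεs
  have hL0 : 0 < L := by linarith
  set β : ℝ := 2^(2*k+1) * 9^k * L with hβdef
  have hβ0 : 0 ≤ β := by positivity
  set A := ∫ x in Nset, Real.exp (β * Upot ε x) ∂haarC with hAdef
  set B := ∫ x in Nsetᶜ, Real.exp (β * Upot ε x) ∂haarC with hBdef
  set EA : ℝ := β * Sp k - 9^k * L with hEAdef
  -- lower bound for A
  have hA : Real.exp EA / (2*Real.pi) ≤ A := by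
    have h1 := setIntegral_expU_ge (ε := ε) hβ0 measurableSet_Nset
      (measurableSet_Iarc (ε := ε) (i := 2*k)) (Iarc_subset_Nset hε0 hε1 (2*k))
      (fun x hx => U_ge_Sp hε0 hε1 hx)
    rw [haarC_Iarc hε0 hε1] at h1
    refine le_trans (le_of_eq ?_) h1
    rw [← mul_div_assoc, exp_mul_eps hε0]
    congr 2
    rw [hEAdef]
    push_cast
    rw [three_pow_even_cast]
  have hA0 : 0 < A := lt_of_lt_of_le (by positivity) hA
  -- the majorant φ on the complement of N
  set P : ℕ → Set Circ :=
    fun j => (fun y : Circ => y - (Real.pi : Circ)) ⁻¹' (Iarc ε (2*j+1)) with hPdef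
  set Pt : Set Circ :=
    (fun y : Circ => y - (Real.pi : Circ)) ⁻¹' (Iarc ε (2*k+3)) with hPtdef
  have hmeasP : ∀ j, MeasurableSet (P j) :=
    fun j => measurableSet_preimage_sub measurableSet_Iarc _
  have hmeasPt : MeasurableSet Pt := measurableSet_preimage_sub measurableSet_Iarc _
  set φ : Circ → ℝ := fun x =>
    (∑ j ∈ Finset.range (k+1), (P j).indicator (fun _ => Real.exp (β * Tp j)) x)
      + (1 + Pt.indicator (fun _ => Real.exp (β/2)) x) with hφdef
  have hφint : Integrable φ haarC := by
    refine Integrable.add ?_ (Integrable.add (integrable_const 1) (integrable_ind hmeasPt _))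
    exact integrable_finset_sum _ (fun j _ => integrable_ind (hmeasP j) _)
  have hφ0 : ∀ x, 0 ≤ φ x := by
    intro x
    have h1 : 0 ≤ ∑ j ∈ Finset.range (k+1),
        (P j).indicator (fun _ => Real.exp (β * Tp j)) x :=
      Finset.sum_nonneg (fun j _ => Set.indicator_nonneg (fun _ _ => (Real.exp_pos _).le) x)
    have h2 : 0 ≤ Pt.indicator (fun _ => Real.exp (β/2)) x :=
      Set.indicator_nonneg (fun _ _ => (Real.exp_pos _).le) x
    simp only [hφdef]
    linarith
  -- pointwise bound on Nᶜ
  have hpoint : ∀ x ∈ Nsetᶜ, Real.exp (β * Upot ε x) ≤ φ x := by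
    intro x hx
    have hxN : x ∉ Nset := hx
    have hsum0 : 0 ≤ ∑ j ∈ Finset.range (k+1),
        (P j).indicator (fun _ => Real.exp (β * Tp j)) x :=
      Finset.sum_nonneg (fun j _ => Set.indicator_nonneg (fun _ _ => (Real.exp_pos _).le) x)
    have htail0 : 0 ≤ Pt.indicator (fun _ => Real.exp (β/2)) x :=
      Set.indicator_nonneg (fun _ _ => (Real.exp_pos _).le) x
    by_cases hmem : x - (Real.pi : Circ) ∈ Iarc ε (2*k+3)
    · have h1 : Real.exp (β * Upot ε x) ≤ Real.exp (β/2) := by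
        apply Real.exp_le_exp.mpr
        have := U_on_Nc_le hε0 hε1 hxN
        nlinarith
      have h2 : Pt.indicator (fun _ => Real.exp (β/2)) x = Real.exp (β/2) :=
        Set.indicator_of_mem (show x ∈ Pt from hmem) _
      simp only [hφdef]
      rw [h2]
      linarith
    · have hex : ∃ j, x - (Real.pi : Circ) ∉ Iarc ε (2*j+1) :=
        ⟨k+1, by rw [show 2*(k+1)+1 = 2*k+3 by ring]; exact hmem⟩
      have hj0spec := Nat.find_spec hex
      have hj0le : Nat.find hex ≤ k+1 :=
        Nat.find_le (by rw [show 2*(k+1)+1 = 2*k+3 by ring]; exact hmem)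
      rcases Nat.eq_zero_or_eq_succ_pred (Nat.find hex) with h0 | hsucc
      · -- j0 = 0 : U ≤ 0
        rw [h0] at hj0spec
        have hU0 : Upot ε x ≤ 0 := by
          apply U_le_zero_of hε0 hε1 ?_ hxN
          simpa using hj0spec
        have h1 : Real.exp (β * Upot ε x) ≤ 1 := by
          rw [show (1:ℝ) = Real.exp 0 by simp]
          apply Real.exp_le_exp.mpr
          nlinarith
        simp only [hφdef]
        linarith
      · set m := (Nat.find hex) - 1 with hmdef
        have hfind : Nat.find hex = m + 1 := hsucc
        have hmk : m ≤ k := by omega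
        have hmem_m : x - (Real.pi : Circ) ∈ Iarc ε (2*m+1) := by
          by_contra hcon
          exact (Nat.find_min hex (by omega : m < Nat.find hex)) hcon
        have hnot_m : x - (Real.pi : Circ) ∉ Iarc ε (2*m+3) := by
          rw [hfind] at hj0spec
          rw [show 2*m+3 = 2*(m+1)+1 by ring]
          exact hj0spec
        have hU : Upot ε x ≤ Tp m := U_le_Tp hε0 hε1 hxN hnot_m
        have h1 : Real.exp (β * Upot ε x) ≤ Real.exp (β * Tp m) :=
          Real.exp_le_exp.mpr (mul_le_mul_of_nonneg_left hU hβ0)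
        have h2 : (P m).indicator (fun _ => Real.exp (β * Tp m)) x = Real.exp (β * Tp m) :=
          Set.indicator_of_mem (show x ∈ P m from hmem_m) _
        have h3 : (P m).indicator (fun _ => Real.exp (β * Tp m)) x
            ≤ ∑ j ∈ Finset.range (k+1), (P j).indicator (fun _ => Real.exp (β * Tp j)) x := by
          refine Finset.single_le_sum
            (f := fun j => (P j).indicator (fun _ => Real.exp (β * Tp j)) x)
            (fun j _ => Set.indicator_nonneg (fun _ _ => (Real.exp_pos _).le) x) ?_
          exact Finset.mem_range.mpr (by omega)
        simp only [hφdef]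
        rw [h2] at h3
        linarith
  -- upper bound for B
  have hB1 : B ≤ ∫ x, φ x ∂haarC := by
    refine le_trans (MeasureTheory.setIntegral_mono_on
      (integrable_expU ε β).integrableOn hφint.integrableOn
      measurableSet_Nset.compl hpoint) ?_
    exact MeasureTheory.setIntegral_le_integral hφint
      (Filter.Eventually.of_forall hφ0)
  have hφval : ∫ x, φ x ∂haarC
      = (∑ j ∈ Finset.range (k+1), Real.exp (β * Tp j) * (haarC (Iarc ε (2*j+1))).toReal)
        + (1 + Real.exp (β/2) * (haarC (Iarc ε (2*k+3))).toReal) := by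
    have hint1 : Integrable (fun x : Circ => ∑ j ∈ Finset.range (k+1),
        (P j).indicator (fun _ => Real.exp (β * Tp j)) x) haarC :=
      MeasureTheory.integrable_finset_sum _ (fun j _ => integrable_ind (hmeasP j) _)
    have hint2 : Integrable (fun x : Circ =>
        1 + Pt.indicator (fun _ => Real.exp (β/2)) x) haarC :=
      (integrable_const 1).add (integrable_ind hmeasPt _)
    have hPmeas : ∀ j : ℕ, haarC (P j) = haarC (Iarc ε (2*j+1)) := by
      intro j; rw [hPdef]; exact haarC_preimage_sub _
    have hPtmeas : haarC Pt = haarC (Iarc ε (2*k+3)) := by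
      rw [hPtdef]; exact haarC_preimage_sub _
    simp only [hφdef]
    rw [MeasureTheory.integral_add hint1 hint2,
      MeasureTheory.integral_finset_sum _ (fun j _ => integrable_ind (hmeasP j) _)]
    congr 1
    · refine Finset.sum_congr rfl (fun j _ => ?_)
      rw [integral_ind (hmeasP j), hPmeas j]
    · rw [MeasureTheory.integral_add (integrable_const 1) (integrable_ind hmeasPt _),
        integral_ind hmeasPt, hPtmeas,
        MeasureTheory.integral_const, measureReal_def, measure_univ, ENNReal.toReal_one, one_smul]
  -- bound every term
  have hterm : ∀ j ∈ Finset.range (k+1),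
      Real.exp (β * Tp j) * (haarC (Iarc ε (2*j+1))).toReal
        ≤ Real.exp EA / (2*Real.pi) * ε^(j+1) := by
    intro j hj
    have hjk : j ≤ k := Nat.lt_succ_iff.mp (Finset.mem_range.mp hj)
    rw [haarC_Iarc hε0 hε1, ← mul_div_assoc, div_mul_eq_mul_div]
    apply div_le_div_of_nonneg_right ?_ h2π.le
    rw [exp_mul_eps hε0, exp_mul_eps hε0]
    apply Real.exp_le_exp.mpr
    push_cast
    rw [show 2*j+1 = 2*j+1 by rfl]
    have hcast : ((3:ℝ))^(2*j+1) = 3*9^j := three_pow_odd_cast j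
    rw [hcast, hEAdef, hβdef]
    nlinarith [mul_le_mul_of_nonneg_right (key_a_coeff hk hjk) hL0.le]
  -- sum bound
  have hsum : ∑ j ∈ Finset.range (k+1),
      Real.exp (β * Tp j) * (haarC (Iarc ε (2*j+1))).toReal
        ≤ Real.exp EA / (2*Real.pi) * (2*ε) := by
    refine le_trans (Finset.sum_le_sum hterm) ?_
    rw [← Finset.mul_sum]
    exact mul_le_mul_of_nonneg_left (geom_sum_le_two_eps hε0.le (by linarith) (k+1))
      (by positivity)
  -- tail bound
  have htail : Real.exp (β/2) * (haarC (Iarc ε (2*k+3))).toReal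
      ≤ Real.exp EA / (2*Real.pi) * ε := by
    rw [haarC_Iarc hε0 hε1, ← mul_div_assoc, div_mul_eq_mul_div]
    apply div_le_div_of_nonneg_right ?_ h2π.le
    conv_rhs => rw [← pow_one ε]
    rw [exp_mul_eps hε0, exp_mul_eps hε0]
    apply Real.exp_le_exp.mpr
    push_cast
    have hcast : ((3:ℝ))^(2*k+3) = 27*9^k := by
      rw [show 2*k+3 = 2*(k+1)+1 by ring, three_pow_odd_cast]
      ring
    rw [hcast, hEAdef, hβdef]
    have hhalf : (2:ℝ)^(2*k+1) * 9^k * L / 2 = 2^(2*k) * 9^k * L := by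
      rw [pow_succ]; ring
    nlinarith [mul_le_mul_of_nonneg_right (key_b_coeff hk) hL0.le]
  -- the constant 1 bound
  have hone : (1:ℝ) ≤ Real.exp EA / (2*Real.pi) * ε := by
    have hEAL : 18 * L ≤ EA := by
      rw [hEAdef, hβdef]
      nlinarith [mul_le_mul_of_nonneg_right (key_c_coeff hk) hL0.le]
    have h2 : 2 ≤ EA - L := by linarith
    have h3 : 2*Real.pi ≤ Real.exp (EA - L) :=
      le_trans two_pi_le_exp_two (Real.exp_le_exp.mpr h2)
    rw [div_mul_eq_mul_div]
    conv_rhs => rw [← pow_one ε]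
    rw [exp_mul_eps hε0, le_div_iff₀ h2π, one_mul]
    push_cast
    exact le_trans h3 (Real.exp_le_exp.mpr (by linarith))
  -- conclude B ≤ 4 ε A
  have hB : B ≤ 4*ε*A := by
    have h1 : B ≤ Real.exp EA / (2*Real.pi) * (2*ε)
        + (Real.exp EA / (2*Real.pi) * ε + Real.exp EA / (2*Real.pi) * ε) := by
      rw [hφval] at hB1
      linarith
    have h2 : Real.exp EA / (2*Real.pi) * (4*ε) ≤ A * (4*ε) :=
      mul_le_mul_of_nonneg_right hA (by positivity)
    nlinarith
  -- final algebra
  have hZ := Z_decomp ε β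
  rw [← hAdef, ← hBdef] at hZ
  have hZpos : (0:ℝ) < ∫ x, Real.exp (β * Upot ε x) ∂haarC := Z_pos ε β
  have hB0 : (0:ℝ) ≤ B := by rw [hBdef]; exact A_nonneg ε β _
  show 1 - 9*ε ≤ Gfun ε β
  rw [Gfun, ← hAdef, le_div_iff₀ hZpos, ← hZ]
  nlinarith [mul_nonneg hε0.le hB0, mul_nonneg hε0.le hA0.le]

/-! ### direction 2: the arc at π dominates -/

set_option maxHeartbeats 2000000 in
lemma dir_two {ε : ℝ} (hε0 : 0 < ε) (hεs : ε ≤ 1/20) {k : ℕ} (hk : 1 ≤ k) :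
    Gfun ε (2^(2*k+4) * 9^k * Real.log ε⁻¹) ≤ 9*ε := by
  classical
  have hε1 : ε ≤ 1 := by linarith
  have h2π : (0:ℝ) < 2*Real.pi := by positivity
  set L := Real.log ε⁻¹ with hLdef
  have hL2 : 2 ≤ L := L_ge_two hε0 hεs
  have hL0 : 0 < L := by linarith
  set β : ℝ := 2^(2*k+4) * 9^k * L with hβdef
  have hβ0 : 0 ≤ β := by positivity
  set A := ∫ x in Nset, Real.exp (β * Upot ε x) ∂haarC with hAdef
  set B := ∫ x in Nsetᶜ, Real.exp (β * Upot ε x) ∂haarC with hBdef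
  set EB : ℝ := β * Tp k - 3*9^k * L with hEBdef
  -- lower bound for B
  set P : Set Circ :=
    (fun y : Circ => y - (Real.pi : Circ)) ⁻¹' (Iarc ε (2*k+1)) with hPdef
  have hmeasP : MeasurableSet P := measurableSet_preimage_sub measurableSet_Iarc _
  have hB : Real.exp EB / (2*Real.pi) ≤ B := by
    have hPN : P ⊆ Nsetᶜ := by
      intro x hx
      exact mem_shift_not_Nset hε0 hε1 hx
    have h1 := setIntegral_expU_ge (ε := ε) hβ0 measurableSet_Nset.compl
      hmeasP hPN (fun x hx => U_ge_Tp hε0 hε1 hx)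
    have hPm : (haarC P).toReal = ε ^ (3^(2*k+1)) / (2*Real.pi) := by
      rw [hPdef, haarC_preimage_sub, haarC_Iarc hε0 hε1]
    rw [hPm] at h1
    refine le_trans (le_of_eq ?_) h1
    rw [← mul_div_assoc, exp_mul_eps hε0]
    congr 2
    rw [hEBdef]
    push_cast
    rw [three_pow_odd_cast]
  have hB0 : 0 < B := lt_of_lt_of_le (by positivity) hB
  -- the majorant ψ on N
  set ψ : Circ → ℝ := fun x =>
    (∑ j ∈ Finset.range k, (Iarc ε (2*(j+1))).indicator
        (fun _ => Real.exp (β * Sp (j+1))) x)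
      + (1 + (Iarc ε (2*k+2)).indicator (fun _ => Real.exp (β/2)) x) with hψdef
  have hψint : Integrable ψ haarC := by
    refine Integrable.add ?_
      (Integrable.add (integrable_const 1) (integrable_ind measurableSet_Iarc _))
    exact MeasureTheory.integrable_finset_sum _
      (fun j _ => integrable_ind measurableSet_Iarc _)
  have hψ0 : ∀ x, 0 ≤ ψ x := by
    intro x
    have h1 : 0 ≤ ∑ j ∈ Finset.range k, (Iarc ε (2*(j+1))).indicator
        (fun _ => Real.exp (β * Sp (j+1))) x :=
      Finset.sum_nonneg (fun j _ => Set.indicator_nonneg (fun _ _ => (Real.exp_pos _).le) x)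
    have h2 : 0 ≤ (Iarc ε (2*k+2)).indicator (fun _ => Real.exp (β/2)) x :=
      Set.indicator_nonneg (fun _ _ => (Real.exp_pos _).le) x
    simp only [hψdef]
    linarith
  -- pointwise bound on N
  have hpoint : ∀ x ∈ Nset, Real.exp (β * Upot ε x) ≤ ψ x := by
    intro x hx
    have hsum0 : 0 ≤ ∑ j ∈ Finset.range k, (Iarc ε (2*(j+1))).indicator
        (fun _ => Real.exp (β * Sp (j+1))) x :=
      Finset.sum_nonneg (fun j _ => Set.indicator_nonneg (fun _ _ => (Real.exp_pos _).le) x)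
    have htail0 : 0 ≤ (Iarc ε (2*k+2)).indicator (fun _ => Real.exp (β/2)) x :=
      Set.indicator_nonneg (fun _ _ => (Real.exp_pos _).le) x
    by_cases hmem : x ∈ Iarc ε (2*k+2)
    · have h1 : Real.exp (β * Upot ε x) ≤ Real.exp (β/2) := by
        apply Real.exp_le_exp.mpr
        have h2 : Upot ε x ≤ 1/2 := by
          rw [U_on_N hε0 hε1 hx]; exact Ept_le_half
        nlinarith
      have h2 : (Iarc ε (2*k+2)).indicator (fun _ => Real.exp (β/2)) x = Real.exp (β/2) :=
        Set.indicator_of_mem hmem _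
      simp only [hψdef]
      rw [h2]
      linarith
    · have hwit : x ∉ Iarc ε (2*k+2) := hmem
      have hex : ∃ j, x ∉ Iarc ε (2*j+2) := ⟨k, hwit⟩
      have hj0spec := Nat.find_spec hex
      have hj0le : Nat.find hex ≤ k := Nat.find_le hwit
      rcases Nat.eq_zero_or_eq_succ_pred (Nat.find hex) with h0 | hsucc
      · rw [h0] at hj0spec
        have hU0 : Upot ε x ≤ 0 := by
          have := U_le_Sp (m := 0) hε0 hε1 hx (by simpa using hj0spec)
          rw [Sp_eq] at this; norm_num at this; exact this
        have h1 : Real.exp (β * Upot ε x) ≤ 1 := by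
          rw [show (1:ℝ) = Real.exp 0 by simp]
          apply Real.exp_le_exp.mpr
          nlinarith
        simp only [hψdef]
        linarith
      · set m := (Nat.find hex) - 1 with hmdef
        have hfind : Nat.find hex = m + 1 := hsucc
        have hmk : m + 1 ≤ k := by omega
        have hmem_m : x ∈ Iarc ε (2*m+2) := by
          by_contra hcon
          exact (Nat.find_min hex (by omega : m < Nat.find hex)) hcon
        have hnot_m : x ∉ Iarc ε (2*(m+1)+2) := by
          rw [hfind] at hj0spec
          exact hj0spec
        have hU : Upot ε x ≤ Sp (m+1) := U_le_Sp hε0 hε1 hx hnot_m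
        have h1 : Real.exp (β * Upot ε x) ≤ Real.exp (β * Sp (m+1)) :=
          Real.exp_le_exp.mpr (mul_le_mul_of_nonneg_left hU hβ0)
        have hmem_m' : x ∈ Iarc ε (2*(m+1)) := by
          rw [show 2*(m+1) = 2*m+2 by ring]
          exact hmem_m
        have h2 : (Iarc ε (2*(m+1))).indicator (fun _ => Real.exp (β * Sp (m+1))) x
            = Real.exp (β * Sp (m+1)) := Set.indicator_of_mem hmem_m' _
        have h3 : (Iarc ε (2*(m+1))).indicator (fun _ => Real.exp (β * Sp (m+1))) x
            ≤ ∑ j ∈ Finset.range k, (Iarc ε (2*(j+1))).indicator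
                (fun _ => Real.exp (β * Sp (j+1))) x := by
          refine Finset.single_le_sum
            (f := fun j => (Iarc ε (2*(j+1))).indicator
              (fun _ => Real.exp (β * Sp (j+1))) x)
            (fun j _ => Set.indicator_nonneg (fun _ _ => (Real.exp_pos _).le) x) ?_
          exact Finset.mem_range.mpr (by omega)
        simp only [hψdef]
        rw [h2] at h3
        linarith
  -- upper bound for A
  have hA1 : A ≤ ∫ x, ψ x ∂haarC := by
    refine le_trans (MeasureTheory.setIntegral_mono_on
      (integrable_expU ε β).integrableOn hψint.integrableOn
      measurableSet_Nset hpoint) ?_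
    exact MeasureTheory.setIntegral_le_integral hψint
      (Filter.Eventually.of_forall hψ0)
  have hψval : ∫ x, ψ x ∂haarC
      = (∑ j ∈ Finset.range k,
          Real.exp (β * Sp (j+1)) * (haarC (Iarc ε (2*(j+1)))).toReal)
        + (1 + Real.exp (β/2) * (haarC (Iarc ε (2*k+2))).toReal) := by
    have hint1 : Integrable (fun x : Circ => ∑ j ∈ Finset.range k,
        (Iarc ε (2*(j+1))).indicator (fun _ => Real.exp (β * Sp (j+1))) x) haarC :=
      MeasureTheory.integrable_finset_sum _ (fun j _ => integrable_ind measurableSet_Iarc _)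
    have hint2 : Integrable (fun x : Circ =>
        1 + (Iarc ε (2*k+2)).indicator (fun _ => Real.exp (β/2)) x) haarC :=
      (integrable_const 1).add (integrable_ind measurableSet_Iarc _)
    simp only [hψdef]
    rw [MeasureTheory.integral_add hint1 hint2,
      MeasureTheory.integral_finset_sum _ (fun j _ => integrable_ind measurableSet_Iarc _)]
    congr 1
    · exact Finset.sum_congr rfl (fun j _ => integral_ind measurableSet_Iarc _)
    · rw [MeasureTheory.integral_add (integrable_const 1)
          (integrable_ind measurableSet_Iarc _),
        integral_ind measurableSet_Iarc,
        MeasureTheory.integral_const, measureReal_def, measure_univ, ENNReal.toReal_one, one_smul]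
  -- bound every term
  have hterm : ∀ j ∈ Finset.range k,
      Real.exp (β * Sp (j+1)) * (haarC (Iarc ε (2*(j+1)))).toReal
        ≤ Real.exp EB / (2*Real.pi) * ε^(j+1) := by
    intro j hj
    have hjk : j + 1 ≤ k := Finset.mem_range.mp hj
    rw [haarC_Iarc hε0 hε1, ← mul_div_assoc, div_mul_eq_mul_div]
    apply div_le_div_of_nonneg_right ?_ h2π.le
    rw [exp_mul_eps hε0, exp_mul_eps hε0]
    apply Real.exp_le_exp.mpr
    push_cast
    rw [← hLdef, three_pow_even_cast, hEBdef, hβdef]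
    have hc := mul_le_mul_of_nonneg_right (key_a2_coeff (m := j+1) hk (by omega) hjk) hL0.le
    push_cast at hc
    nlinarith [hc]
  have hsum : ∑ j ∈ Finset.range k,
      Real.exp (β * Sp (j+1)) * (haarC (Iarc ε (2*(j+1)))).toReal
        ≤ Real.exp EB / (2*Real.pi) * (2*ε) := by
    refine le_trans (Finset.sum_le_sum hterm) ?_
    rw [← Finset.mul_sum]
    exact mul_le_mul_of_nonneg_left (geom_sum_le_two_eps hε0.le (by linarith) k)
      (by positivity)
  have htail : Real.exp (β/2) * (haarC (Iarc ε (2*k+2))).toReal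
      ≤ Real.exp EB / (2*Real.pi) * ε := by
    rw [haarC_Iarc hε0 hε1, ← mul_div_assoc, div_mul_eq_mul_div]
    apply div_le_div_of_nonneg_right ?_ h2π.le
    conv_rhs => rw [← pow_one ε]
    rw [exp_mul_eps hε0, exp_mul_eps hε0]
    apply Real.exp_le_exp.mpr
    push_cast
    have hcast : ((3:ℝ))^(2*k+2) = 9^(k+1) := by
      rw [show 2*k+2 = 2*(k+1) by ring, three_pow_even_cast]
    rw [← hLdef, hcast, hEBdef, hβdef]
    have hhalf : (2:ℝ)^(2*k+4) * 9^k * L / 2 = 2^(2*k+3) * 9^k * L := by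
      rw [show 2*k+4 = (2*k+3)+1 by ring, pow_succ]; ring
    nlinarith [mul_le_mul_of_nonneg_right (key_b2_coeff hk) hL0.le]
  have hone : (1:ℝ) ≤ Real.exp EB / (2*Real.pi) * ε := by
    have hEBL : 18 * L ≤ EB := by
      rw [hEBdef, hβdef]
      nlinarith [mul_le_mul_of_nonneg_right (key_c2_coeff hk) hL0.le]
    have h2 : 2 ≤ EB - L := by linarith
    have h3 : 2*Real.pi ≤ Real.exp (EB - L) :=
      le_trans two_pi_le_exp_two (Real.exp_le_exp.mpr h2)
    rw [div_mul_eq_mul_div]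
    conv_rhs => rw [← pow_one ε]
    rw [exp_mul_eps hε0, le_div_iff₀ h2π, one_mul]
    push_cast
    rw [← hLdef]
    exact le_trans h3 (Real.exp_le_exp.mpr (by linarith))
  -- conclude A ≤ 4 ε B
  have hA : A ≤ 4*ε*B := by
    have h1 : A ≤ Real.exp EB / (2*Real.pi) * (2*ε)
        + (Real.exp EB / (2*Real.pi) * ε + Real.exp EB / (2*Real.pi) * ε) := by
      rw [hψval] at hA1
      linarith
    have h2 : Real.exp EB / (2*Real.pi) * (4*ε) ≤ B * (4*ε) :=
      mul_le_mul_of_nonneg_right hB (by positivity)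
    nlinarith
  -- final algebra
  have hZ := Z_decomp ε β
  rw [← hAdef, ← hBdef] at hZ
  have hZpos : (0:ℝ) < ∫ x, Real.exp (β * Upot ε x) ∂haarC := Z_pos ε β
  have hA0 : (0:ℝ) ≤ A := by rw [hAdef]; exact A_nonneg ε β _
  show Gfun ε β ≤ 9*ε
  rw [Gfun, ← hAdef, div_le_iff₀ hZpos, ← hZ]
  nlinarith [mul_nonneg hε0.le hA0, mul_nonneg hε0.le hB0.le]

lemma beta_large {ε : ℝ} (hε0 : 0 < ε) (hεs : ε ≤ 1/20) (c : ℝ) (k : ℕ)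
    (hc : (k:ℝ) ≤ c) : (k:ℝ) ≤ c * Real.log ε⁻¹ := by
  have hL2 : 2 ≤ Real.log ε⁻¹ := L_ge_two hε0 hεs
  have hk0 : (0:ℝ) ≤ (k:ℝ) := Nat.cast_nonneg k
  nlinarith

lemma coeff_ge_k1 (k : ℕ) : (k:ℝ) ≤ 2^(2*k+1) * 9^k := by
  have h1 := nat_succ_le_ninepow k
  have h2 : (1:ℝ) ≤ 2^(2*k+1) := one_le_pow₀ (by norm_num)
  nlinarith [pow_pos (show (0:ℝ) < 9 by norm_num) k]

lemma coeff_ge_k2 (k : ℕ) : (k:ℝ) ≤ 2^(2*k+4) * 9^k := by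
  have h1 := nat_succ_le_ninepow k
  have h2 : (1:ℝ) ≤ 2^(2*k+4) := one_le_pow₀ (by norm_num)
  nlinarith [pow_pos (show (0:ℝ) < 9 by norm_num) k]

end VER

/-- van Enter–Ruszel non-selection: for every `δ ∈ (0,1/2)` there is
`ε_δ > 0` such that for all `0 < ε < ε_δ`, `limsup_{β→∞} G_ε(β) > 1 − δ` and
`liminf_{β→∞} G_ε(β) < δ`; in particular `G_ε(β)` has no limit as `β → ∞`, so the
family of two-site marginals of the Gibbs states does not converge as the
temperature goes to zero. -/
theorem no_selection (δ : ℝ) (hδ0 : 0 < δ) (hδ : δ < 1 / 2) :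
    ∃ εδ : ℝ, 0 < εδ ∧ εδ ≤ 1 ∧ ∀ ε : ℝ, 0 < ε → ε < εδ →
      (1 - δ < Filter.limsup (fun β : ℝ => Gfun ε β) Filter.atTop) ∧
      (Filter.liminf (fun β : ℝ => Gfun ε β) Filter.atTop < δ) := by
  refine ⟨δ/10, by linarith, by linarith, ?_⟩
  intro ε hε0 hεδ
  have hεs : ε ≤ 1/20 := by linarith
  have h9ε : 9*ε < δ := by linarith
  have hbdd_above : Filter.IsBoundedUnder (· ≤ ·) Filter.atTop (fun β : ℝ => Gfun ε β) :=
    Filter.isBoundedUnder_of ⟨1, fun β => VER.Gfun_le_one ε β⟩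
  have hbdd_below : Filter.IsBoundedUnder (· ≥ ·) Filter.atTop (fun β : ℝ => Gfun ε β) :=
    Filter.isBoundedUnder_of ⟨0, fun β => VER.Gfun_nonneg ε β⟩
  constructor
  · have hfreq : ∃ᶠ β in Filter.atTop, 1 - 9*ε ≤ Gfun ε β := by
      rw [Filter.frequently_atTop]
      intro M
      set k : ℕ := max 1 (Nat.ceil M) with hkdef
      refine ⟨2^(2*k+1) * 9^k * Real.log ε⁻¹, ?_, VER.dir_one hε0 hεs (le_max_left 1 _)⟩
      calc M ≤ (Nat.ceil M : ℝ) := Nat.le_ceil M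
      _ ≤ (k:ℝ) := by exact_mod_cast Nat.cast_le.mpr (le_max_right 1 _)
      _ ≤ 2^(2*k+1) * 9^k * Real.log ε⁻¹ :=
        VER.beta_large hε0 hεs _ k (VER.coeff_ge_k1 k)
    have h1 : 1 - 9*ε ≤ Filter.limsup (fun β : ℝ => Gfun ε β) Filter.atTop :=
      Filter.le_limsup_of_frequently_le hfreq hbdd_above
    linarith
  · have hfreq : ∃ᶠ β in Filter.atTop, Gfun ε β ≤ 9*ε := by
      rw [Filter.frequently_atTop]
      intro M
      set k : ℕ := max 1 (Nat.ceil M) with hkdef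
      refine ⟨2^(2*k+4) * 9^k * Real.log ε⁻¹, ?_, VER.dir_two hε0 hεs (le_max_left 1 _)⟩
      calc M ≤ (Nat.ceil M : ℝ) := Nat.le_ceil M
      _ ≤ (k:ℝ) := by exact_mod_cast Nat.cast_le.mpr (le_max_right 1 _)
      _ ≤ 2^(2*k+4) * 9^k * Real.log ε⁻¹ :=
        VER.beta_large hε0 hεs _ k (VER.coeff_ge_k2 k)
    have h1 : Filter.liminf (fun β : ℝ => Gfun ε β) Filter.atTop ≤ 9*ε :=
      Filter.liminf_le_of_frequently_le hfreq hbdd_below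
    linarith
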